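/- Let k be a field, q ∈ k^×, and θ : O_q(M_{m,n}(k)) → O_q(k^m) ⊗_k O_q(k^n) the k-algebra homomorphism with θ(X_{ij}) = y_i ⊗ z_j. Then θ maps the set S of monomials X_{i_1 j_1} ⋯ X_{i_l j_l} with i_1 ≥ ⋯ ≥ i_l and j_1 ≤ ⋯ ≤ j_l injectively onto a k-linearly independent subset of O_q(k^m) ⊗_k O_q(k^n); explicitly, θ(X_{i_1 j_1} ⋯ X_{i_l j_l}) = y_{i_1} ⋯ y_{i_l} ⊗ z_{j_1} ⋯ z_{j_l}. -/

import Mathlib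

open scoped TensorProduct

noncomputable section

/-- Defining relations of the coordinate ring `O_q(k^n)` of quantum affine `n`-space:
`y_i y_j = q y_j y_i` for `i < j`. -/
inductive AffRel (k : Type) [Field k] (q : k) (n : ℕ) :
    FreeAlgebra k (Fin n) → FreeAlgebra k (Fin n) → Prop
  | rel : ∀ {i j : Fin n}, i < j →
      AffRel k q n (FreeAlgebra.ι k i * FreeAlgebra.ι k j)
        (q • (FreeAlgebra.ι k j * FreeAlgebra.ι k i))

/-- The coordinate ring `O_q(k^n)` of quantum affine `n`-space. -/
abbrev QAff (k : Type) [Field k] (q : k) (n : ℕ) : Type := RingQuot (AffRel k q n)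

/-- The canonical generators `y_1, …, y_n` of `O_q(k^n)`. -/
def affGen (k : Type) [Field k] (q : k) (n : ℕ) (i : Fin n) : QAff k q n :=
  RingQuot.mkAlgHom k (AffRel k q n) (FreeAlgebra.ι k i)

/-- Defining relations of the coordinate ring `O_q(M_{m,n}(k))` of quantum `m × n` matrices. -/
inductive MatRel (k : Type) [Field k] (q : k) (m n : ℕ) :
    FreeAlgebra k (Fin m × Fin n) → FreeAlgebra k (Fin m × Fin n) → Prop
  | col : ∀ {i l : Fin m} {j : Fin n}, i < l →
      MatRel k q m n (FreeAlgebra.ι k (i, j) * FreeAlgebra.ι k (l, j))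
        (q • (FreeAlgebra.ι k (l, j) * FreeAlgebra.ι k (i, j)))
  | row : ∀ {i : Fin m} {j s : Fin n}, j < s →
      MatRel k q m n (FreeAlgebra.ι k (i, j) * FreeAlgebra.ι k (i, s))
        (q • (FreeAlgebra.ι k (i, s) * FreeAlgebra.ι k (i, j)))
  | comm : ∀ {i l : Fin m} {j s : Fin n}, i < l → j < s →
      MatRel k q m n (FreeAlgebra.ι k (i, s) * FreeAlgebra.ι k (l, j))
        (FreeAlgebra.ι k (l, j) * FreeAlgebra.ι k (i, s))
  | mixed : ∀ {i l : Fin m} {j s : Fin n}, i < l → j < s →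
      MatRel k q m n
        (FreeAlgebra.ι k (i, j) * FreeAlgebra.ι k (l, s) -
          FreeAlgebra.ι k (l, s) * FreeAlgebra.ι k (i, j))
        ((q - q⁻¹) • (FreeAlgebra.ι k (i, s) * FreeAlgebra.ι k (l, j)))

/-- The coordinate ring `O_q(M_{m,n}(k))` of quantum `m × n` matrices. -/
abbrev QMat (k : Type) [Field k] (q : k) (m n : ℕ) : Type := RingQuot (MatRel k q m n)

/-- The canonical generators `X i j` of `O_q(M_{m,n}(k))`. -/
def X (k : Type) [Field k] (q : k) (m n : ℕ) (i : Fin m) (j : Fin n) : QMat k q m n :=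
  RingQuot.mkAlgHom k (MatRel k q m n) (FreeAlgebra.ι k (i, j))

/-- The two-sided ideal `I₁` of `O_q(M_{m,n}(k))` generated by the `2 × 2` quantum minors
`X_{ij} X_{ls} - q X_{is} X_{lj}` for `i < l`, `j < s`. -/
def I₁ (k : Type) [Field k] (q : k) (m n : ℕ) : TwoSidedIdeal (QMat k q m n) :=
  TwoSidedIdeal.span
    { a | ∃ (i l : Fin m) (j s : Fin n), i < l ∧ j < s ∧
        a = X k q m n i j * X k q m n l s - q • (X k q m n i s * X k q m n l j) }

/-- The monomial `X_{i₁j₁} X_{i₂j₂} ⋯ X_{iₗjₗ}` associated to a list of index pairs. -/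
def matMono (k : Type) [Field k] (q : k) (m n : ℕ) (L : List (Fin m × Fin n)) :
    QMat k q m n :=
  (L.map fun p => X k q m n p.1 p.2).prod

/-- A list of index pairs is *ordered* if the row indices are non-increasing and the column
indices are non-decreasing, i.e. `i₁ ≥ i₂ ≥ ⋯ ≥ iₗ` and `j₁ ≤ j₂ ≤ ⋯ ≤ jₗ`. -/
def OrderedIdx {m n : ℕ} (L : List (Fin m × Fin n)) : Prop :=
  L.Chain' fun p p' => p'.1 ≤ p.1 ∧ p.2 ≤ p'.2

namespace QAffAux

open MvPolynomial

variable (k : Type) [Field k] (q : k) (n : ℕ)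

/-- The scaling substitution `X j ↦ q X j` for `j > i`. -/
def subst (i : Fin n) : MvPolynomial (Fin n) k →ₐ[k] MvPolynomial (Fin n) k :=
  aeval fun j => if i < j then C q * X j else X j

lemma subst_comm (i j : Fin n) :
    (subst k q n i).comp (subst k q n j) = (subst k q n j).comp (subst k q n i) := by
  apply MvPolynomial.algHom_ext
  intro t
  simp only [AlgHom.comp_apply, subst, aeval_X]
  by_cases h1 : i < t <;> by_cases h2 : j < t <;>
    simp [subst, h1, h2, map_mul, aeval_X, aeval_C, MvPolynomial.algebraMap_eq, mul_left_comm]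

/-- The operator `f ↦ X i * subst i f`. -/
def T (i : Fin n) : Module.End k (MvPolynomial (Fin n) k) :=
  (LinearMap.mulLeft k (X i)) ∘ₗ (subst k q n i).toLinearMap

lemma T_apply (i : Fin n) (f : MvPolynomial (Fin n) k) :
    T k q n i f = X i * subst k q n i f := rfl

lemma T_rel {i j : Fin n} (h : i < j) :
    T k q n i * T k q n j = q • (T k q n j * T k q n i) := by
  apply LinearMap.ext
  intro f
  have hc : subst k q n i (subst k q n j f) = subst k q n j (subst k q n i f) := by
    have := DFunLike.congr_fun (subst_comm k q n i j) f
    simpa [AlgHom.comp_apply] using this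
  simp only [Module.End.mul_apply, LinearMap.smul_apply, T_apply, map_mul]
  have h1 : subst k q n i (X j) = C q * X j := by simp [subst, aeval_X, h]
  have h2 : subst k q n j (X i) = X i := by simp [subst, aeval_X, (lt_asymm h : ¬ j < i)]
  rw [h1, h2, hc, smul_eq_C_mul]
  ring

/-- The representation of `O_q(k^n)` on polynomials. -/
def rho : QAff k q n →ₐ[k] Module.End k (MvPolynomial (Fin n) k) :=
  RingQuot.liftAlgHom k ⟨FreeAlgebra.lift k (T k q n), by
    rintro x y ⟨h⟩
    simp only [map_mul, map_smul, FreeAlgebra.lift_ι_apply]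
    exact T_rel k q n h⟩

lemma rho_affGen (i : Fin n) : rho k q n (affGen k q n i) = T k q n i := by
  rw [affGen, rho, RingQuot.liftAlgHom_mkAlgHom_apply, FreeAlgebra.lift_ι_apply]

/-- Evaluation of the representation at the constant polynomial `1`. -/
def ev : QAff k q n →ₗ[k] MvPolynomial (Fin n) k :=
  LinearMap.applyₗ (1 : MvPolynomial (Fin n) k) ∘ₗ (rho k q n).toLinearMap

lemma ev_apply (a : QAff k q n) : ev k q n a = rho k q n a 1 := rfl

/-- The exponent vector of a list of indices. -/
def cnt (r : List (Fin n)) : Fin n →₀ ℕ := (r.map fun i => Finsupp.single i 1).sum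

lemma cnt_nil : cnt n ([] : List (Fin n)) = 0 := rfl

lemma cnt_cons (i : Fin n) (r : List (Fin n)) :
    cnt n (i :: r) = Finsupp.single i 1 + cnt n r := by
  simp [cnt]

lemma cnt_apply (r : List (Fin n)) (j : Fin n) : cnt n r j = r.count j := by
  induction r with
  | nil => simp [cnt]
  | cons i r ih =>
    rw [cnt_cons, Finsupp.add_apply, ih, List.count_cons, Finsupp.single_apply]
    by_cases h : i = j
    · simp [h, add_comm]
    · simp [h, Ne.symm h]

lemma cnt_perm {r r' : List (Fin n)} (h : cnt n r = cnt n r') : r.Perm r' :=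
  List.perm_iff_count.mpr fun j => by
    rw [← cnt_apply n r j, ← cnt_apply n r' j, h]

lemma Xprod_eq (r : List (Fin n)) :
    ((r.map X).prod : MvPolynomial (Fin n) k) = monomial (cnt n r) 1 := by
  induction r with
  | nil => simp [cnt_nil, monomial_zero']
  | cons i r ih =>
    rw [List.map_cons, List.prod_cons, ih, cnt_cons, monomial_single_add, pow_one]

lemma subst_Xprod (hq : q ≠ 0) (i : Fin n) (r : List (Fin n)) :
    ∃ c : k, c ≠ 0 ∧
      subst k q n i ((r.map X).prod) = c • ((r.map X).prod : MvPolynomial (Fin n) k) := by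
  induction r with
  | nil => exact ⟨1, one_ne_zero, by simp⟩
  | cons j r ih =>
    obtain ⟨c, hc, hcr⟩ := ih
    have hx : ∃ a : k, a ≠ 0 ∧ subst k q n i (X j) = a • X j := by
      by_cases hij : i < j
      · exact ⟨q, hq, by simp [subst, aeval_X, hij, smul_eq_C_mul]⟩
      · exact ⟨1, one_ne_zero, by simp [subst, aeval_X, hij]⟩
    obtain ⟨a, ha, hxa⟩ := hx
    refine ⟨a * c, mul_ne_zero ha hc, ?_⟩
    rw [List.map_cons, List.prod_cons, map_mul, hxa, hcr, smul_mul_assoc,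
      mul_smul_comm, smul_smul]

lemma ev_prod (hq : q ≠ 0) (r : List (Fin n)) :
    ∃ c : k, c ≠ 0 ∧
      ev k q n ((r.map (affGen k q n)).prod) = c • monomial (cnt n r) (1 : k) := by
  induction r with
  | nil =>
    refine ⟨1, one_ne_zero, ?_⟩
    simp [ev_apply, cnt_nil, monomial_zero']
  | cons i r ih =>
    obtain ⟨c, hc, hev⟩ := ih
    have key : ev k q n (((i :: r).map (affGen k q n)).prod)
        = T k q n i (ev k q n ((r.map (affGen k q n)).prod)) := by
      rw [List.map_cons, List.prod_cons, ev_apply, ev_apply, map_mul, rho_affGen]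
      rfl
    obtain ⟨c', hc', hs⟩ := subst_Xprod k q n hq i r
    rw [Xprod_eq] at hs
    refine ⟨c * c', mul_ne_zero hc hc', ?_⟩
    rw [key, hev, map_smul, T_apply, hs, cnt_cons, monomial_single_add, pow_one,
      mul_smul_comm, smul_smul, mul_comm c c']

end QAffAux

lemma list_pair_ext {α β : Type*} :
    ∀ (L L' : List (α × β)), L.map Prod.fst = L'.map Prod.fst →
      L.map Prod.snd = L'.map Prod.snd → L = L' := by
  intro L
  induction L with
  | nil =>
    intro L' h1 _
    cases L' with
    | nil => rfl
    | cons _ _ => simp at h1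
  | cons p L ih =>
    intro L' h1 h2
    cases L' with
    | nil => simp at h1
    | cons p' L'' =>
      simp only [List.map_cons, List.cons.injEq] at h1 h2
      obtain ⟨hf, hfs⟩ := h1
      obtain ⟨hs, hss⟩ := h2
      rw [ih L'' hfs hss]
      congr 1
      exact Prod.ext hf hs

/-- `θ` sends the monomial `X_{i₁j₁} ⋯ X_{iₗjₗ}` to
`y_{i₁} ⋯ y_{iₗ} ⊗ z_{j₁} ⋯ z_{jₗ}`, and it maps the set of ordered monomials injectively
onto a `k`-linearly independent subset of `O_q(k^m) ⊗ O_q(k^n)`. -/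
theorem theta_orderedMono_linearIndependent (k : Type) [Field k] (q : k) (hq : q ≠ 0)
    (m n : ℕ)
    (θ : QMat k q m n →ₐ[k] QAff k q m ⊗[k] QAff k q n)
    (hθ : ∀ (i : Fin m) (j : Fin n),
      θ (X k q m n i j) = affGen k q m i ⊗ₜ[k] affGen k q n j) :
    (∀ L : List (Fin m × Fin n),
        θ (matMono k q m n L) =
          ((L.map fun p => affGen k q m p.1).prod) ⊗ₜ[k]
            ((L.map fun p => affGen k q n p.2).prod)) ∧
      LinearIndependent k
        (fun L : { L : List (Fin m × Fin n) // OrderedIdx L } =>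
          θ (matMono k q m n L.1)) ∧
      Set.InjOn θ { a : QMat k q m n |
        ∃ L : List (Fin m × Fin n), OrderedIdx L ∧ a = matMono k q m n L } := by
  classical
  open QAffAux MvPolynomial in
  -- Part 1
  have part1 : ∀ L : List (Fin m × Fin n),
      θ (matMono k q m n L) =
        ((L.map fun p => affGen k q m p.1).prod) ⊗ₜ[k]
          ((L.map fun p => affGen k q n p.2).prod) := by
    intro L
    induction L with
    | nil => simp [matMono, Algebra.TensorProduct.one_def]
    | cons p L ih =>
      simp only [matMono, List.map_cons, List.prod_cons, map_mul] at *
      rw [ih, hθ, Algebra.TensorProduct.tmul_mul_tmul]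
  -- setup for linear independence
  set φ : QAff k q m ⊗[k] QAff k q n →ₗ[k]
      MvPolynomial (Fin m) k ⊗[k] MvPolynomial (Fin n) k :=
    TensorProduct.map (ev k q m) (ev k q n) with hφ
  set B := (MvPolynomial.basisMonomials (Fin m) k).tensorProduct
      (MvPolynomial.basisMonomials (Fin n) k) with hB
  set g : { L : List (Fin m × Fin n) // OrderedIdx L } →
      (Fin m →₀ ℕ) × (Fin n →₀ ℕ) :=
    fun L => (cnt m (L.1.map Prod.fst), cnt n (L.1.map Prod.snd)) with hg
  haveI : IsTrans (Fin m) (fun a b => b ≤ a) := ⟨fun _ _ _ h1 h2 => le_trans h2 h1⟩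
  haveI : IsAntisymm (Fin m) (fun a b => b ≤ a) := ⟨fun _ _ h1 h2 => le_antisymm h2 h1⟩
  have ginj : Function.Injective g := by
    intro L L' h
    rw [hg, Prod.mk.injEq] at h
    obtain ⟨h1, h2⟩ := h
    have hrow : (L.1.map Prod.fst).Perm (L'.1.map Prod.fst) := cnt_perm m h1
    have hcol : (L.1.map Prod.snd).Perm (L'.1.map Prod.snd) := cnt_perm n h2
    have sortedRow : ∀ M : { L : List (Fin m × Fin n) // OrderedIdx L },
        (M.1.map Prod.fst).Pairwise fun a b => b ≤ a := by
      intro M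
      rw [List.isChain_iff_pairwise.symm, List.isChain_map]
      exact M.2.imp fun a b h => h.1
    have sortedCol : ∀ M : { L : List (Fin m × Fin n) // OrderedIdx L },
        (M.1.map Prod.snd).Pairwise fun a b => a ≤ b := by
      intro M
      rw [List.isChain_iff_pairwise.symm, List.isChain_map]
      exact M.2.imp fun a b h => h.2
    have er : L.1.map Prod.fst = L'.1.map Prod.fst :=
      hrow.eq_of_pairwise' (sortedRow L) (sortedRow L')
    have ec : L.1.map Prod.snd = L'.1.map Prod.snd :=
      hcol.eq_of_pairwise' (sortedCol L) (sortedCol L')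
    exact Subtype.ext (list_pair_ext _ _ er ec)
  -- scalars
  have hc := fun (L : { L : List (Fin m × Fin n) // OrderedIdx L }) =>
    ev_prod k q m hq (L.1.map Prod.fst)
  have hd := fun (L : { L : List (Fin m × Fin n) // OrderedIdx L }) =>
    ev_prod k q n hq (L.1.map Prod.snd)
  set u : { L : List (Fin m × Fin n) // OrderedIdx L } → kˣ :=
    fun L => Units.mk0 ((hc L).choose * (hd L).choose)
      (mul_ne_zero (hc L).choose_spec.1 (hd L).choose_spec.1) with hu
  have hφθ : (fun L : { L : List (Fin m × Fin n) // OrderedIdx L } =>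
      φ (θ (matMono k q m n L.1))) = u • fun L => B (g L) := by
    funext L
    have hLmap : (L.1.map fun p => affGen k q m p.1) = (L.1.map Prod.fst).map (affGen k q m) := by
      rw [List.map_map]; rfl
    have hLmap' : (L.1.map fun p => affGen k q n p.2) = (L.1.map Prod.snd).map (affGen k q n) := by
      rw [List.map_map]; rfl
    rw [part1, hφ, TensorProduct.map_tmul, hLmap, hLmap',
      (hc L).choose_spec.2, (hd L).choose_spec.2]
    rw [TensorProduct.tmul_smul, ← TensorProduct.smul_tmul', smul_smul]
    have hBg : B (g L) = (monomial (cnt m (L.1.map Prod.fst)) (1 : k)) ⊗ₜ[k]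
        (monomial (cnt n (L.1.map Prod.snd)) (1 : k)) := by
      rw [hB, hg, Module.Basis.tensorProduct_apply, MvPolynomial.coe_basisMonomials, MvPolynomial.coe_basisMonomials]
    rw [Pi.smul_apply', hBg, hu, Units.smul_def, Units.val_mk0, mul_comm]
  have hindφ : LinearIndependent k (fun L : { L : List (Fin m × Fin n) // OrderedIdx L } =>
      φ (θ (matMono k q m n L.1))) := by
    rw [hφθ]
    exact (B.linearIndependent.comp g ginj).units_smul u
  have hLI : LinearIndependent k
      (fun L : { L : List (Fin m × Fin n) // OrderedIdx L } =>
        θ (matMono k q m n L.1)) := LinearIndependent.of_comp φ hindφ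
  refine ⟨part1, hLI, ?_⟩
  rintro a ⟨L, hL, rfl⟩ b ⟨L', hL', rfl⟩ hab
  have : (⟨L, hL⟩ : { L : List (Fin m × Fin n) // OrderedIdx L }) = ⟨L', hL'⟩ :=
    hLI.injective hab
  rw [Subtype.mk.injEq] at this
  rw [this]
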